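/- Let P and Q be probability measures on a measurable space Ω, and let T : Ω → ℝ be measurable such that ω ↦ sp(−T(ω)) is P-integrable and ω ↦ sp(T(ω)) is Q-integrable, where sp(z) = log(1 + exp z) is the softplus function. Then ∫ (− sp(−T(ω))) dP(ω) − ∫ sp(T(ω)) dQ(ω) ≤ 2·JS(P, Q) − log 4, where JS(P, Q) = (1/2)·KL(P ‖ (1/2)(P+Q)) + (1/2)·KL(Q ‖ (1/2)(P+Q)). -/

import Mathlib

open MeasureTheory
open scoped ENNReal Classical

/-- The softplus function `sp(z) = log(1 + exp z)`. -/
noncomputable def softplus (z : ℝ) : ℝ := Real.log (1 + Real.exp z)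

/-- Kullback–Leibler divergence between measures: `∫ log(dP/dQ) dP` when `P ≪ Q` and the
log-likelihood ratio is `P`-integrable, and `∞` otherwise. -/
noncomputable def klDivM {Ω : Type*} [MeasurableSpace Ω] (P Q : Measure Ω) : ℝ≥0∞ :=
  if P ≪ Q ∧ Integrable (llr P Q) P then ENNReal.ofReal (∫ ω, llr P Q ω ∂P) else ⊤

/-- Jensen–Shannon divergence
`JS(P, Q) = (1/2)·KL(P ‖ (1/2)(P+Q)) + (1/2)·KL(Q ‖ (1/2)(P+Q))`. -/
noncomputable def jsDiv {Ω : Type*} [MeasurableSpace Ω] (P Q : Measure Ω) : ℝ≥0∞ :=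
  2⁻¹ * klDivM P ((2 : ℝ≥0∞)⁻¹ • (P + Q)) + 2⁻¹ * klDivM Q ((2 : ℝ≥0∞)⁻¹ • (P + Q))

lemma log_four : Real.log 4 = 2 * Real.log 2 := by
  have : (4:ℝ) = 2 * 2 := by norm_num
  rw [this, Real.log_mul two_ne_zero two_ne_zero]; ring

lemma gibbs_pointwise {a b s : ℝ} (ha : 0 ≤ a) (hb : 0 ≤ b) (hab : a + b = 2)
    (hs0 : 0 < s) (hs1 : s < 1) :
    a * Real.log s + b * Real.log (1 - s) ≤ a * Real.log a + b * Real.log b - Real.log 4 := by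
  have h1s : 0 < 1 - s := by linarith
  rcases eq_or_lt_of_le ha with ha0 | ha
  · have hb2 : b = 2 := by linarith
    have hls : Real.log (1 - s) ≤ 0 := Real.log_nonpos (by linarith) (by linarith)
    rw [← ha0, hb2, log_four]
    nlinarith [Real.log_pos (show (1:ℝ) < 2 by norm_num)]
  rcases eq_or_lt_of_le hb with hb0 | hb
  · have ha2 : a = 2 := by linarith
    have hls : Real.log s ≤ 0 := Real.log_nonpos hs0.le hs1.le
    rw [← hb0, ha2, log_four]
    nlinarith [Real.log_pos (show (1:ℝ) < 2 by norm_num)]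
  have h1 := Real.log_le_sub_one_of_pos (show 0 < s / (a/2) by positivity)
  rw [Real.log_div hs0.ne' (by positivity)] at h1
  have h2 := Real.log_le_sub_one_of_pos (show 0 < (1-s) / (b/2) by positivity)
  rw [Real.log_div h1s.ne' (by positivity)] at h2
  have e1 : a * (s / (a/2)) = 2 * s := by field_simp
  have e2 : b * ((1-s) / (b/2)) = 2 * (1-s) := by field_simp
  have h1' : a * Real.log s ≤ a * Real.log (a/2) + (2*s - a) := by nlinarith
  have h2' : b * Real.log (1-s) ≤ b * Real.log (b/2) + (2*(1-s) - b) := by nlinarith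
  have ea : a * Real.log (a/2) = a * Real.log a - a * Real.log 2 := by
    rw [Real.log_div ha.ne' two_ne_zero]; ring
  have eb : b * Real.log (b/2) = b * Real.log b - b * Real.log 2 := by
    rw [Real.log_div hb.ne' two_ne_zero]; ring
  have el : a * Real.log 2 + b * Real.log 2 = 2 * Real.log 2 := by
    rw [← add_mul, hab]
  rw [log_four]
  linarith

lemma softplus_pointwise {a b : ℝ} (t : ℝ) (ha : 0 ≤ a) (hb : 0 ≤ b) (hab : a + b = 2) :
    a * (-softplus (-t)) - b * softplus t ≤
      a * Real.log a + b * Real.log b - Real.log 4 := by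
  set s : ℝ := (1 + Real.exp (-t))⁻¹ with hs
  have he := Real.exp_pos (-t)
  have hs0 : 0 < s := by positivity
  have hs1 : s < 1 := by
    rw [hs]
    exact inv_lt_one_of_one_lt₀ (by linarith)
  have hlogs : Real.log s = -softplus (-t) := by
    rw [hs, Real.log_inv, softplus]
  have h1s : 1 - s = (1 + Real.exp t)⁻¹ := by
    rw [hs, Real.exp_neg]
    have h := Real.exp_pos t
    field_simp
    ring
  have hlog1s : Real.log (1 - s) = -softplus t := by
    rw [h1s, Real.log_inv, softplus]
  have := gibbs_pointwise ha hb hab hs0 hs1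
  rw [hlogs, hlog1s] at this
  linarith

lemma abs_mul_log_le {x : ℝ} (hx0 : 0 ≤ x) (hx2 : x ≤ 2) : |x * Real.log x| ≤ 2 := by
  rcases eq_or_lt_of_le hx0 with h0 | h0
  · simp [← h0]
  have hu : Real.log x ≤ x - 1 := Real.log_le_sub_one_of_pos h0
  have hl : Real.log x⁻¹ ≤ x⁻¹ - 1 := Real.log_le_sub_one_of_pos (by positivity)
  rw [Real.log_inv] at hl
  have hxi : x * x⁻¹ = 1 := mul_inv_cancel₀ h0.ne'
  rw [abs_le]
  constructor
  · nlinarith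
  · nlinarith

lemma le_toReal_ofReal (r : ℝ) : r ≤ (ENNReal.ofReal r).toReal := by
  rcases le_or_gt 0 r with h | h
  · rw [ENNReal.toReal_ofReal h]
  · rw [ENNReal.ofReal_of_nonpos h.le]; simpa using h.le

/-- Softplus parameterization of the variational Jensen–Shannon bound:
`∫ (−sp(−T)) dP − ∫ sp(T) dQ ≤ 2·JS(P, Q) − log 4`. -/
theorem softplus_js_bound {Ω : Type*} [MeasurableSpace Ω]
    (P Q : Measure Ω) [IsProbabilityMeasure P] [IsProbabilityMeasure Q]
    (T : Ω → ℝ) (hT : Measurable T)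
    (hPint : Integrable (fun ω => softplus (-T ω)) P)
    (hQint : Integrable (fun ω => softplus (T ω)) Q) :
    (∫ ω, -softplus (-T ω) ∂P) - (∫ ω, softplus (T ω) ∂Q) ≤
      2 * (jsDiv P Q).toReal - Real.log 4 := by
  set M : Measure Ω := (2 : ℝ≥0∞)⁻¹ • (P + Q) with hM
  have hMuniv : M Set.univ = 1 := by
    rw [hM]
    simp only [Measure.smul_apply, Measure.coe_add, Pi.add_apply, measure_univ, smul_eq_mul]
    rw [one_add_one_eq_two, ENNReal.inv_mul_cancel two_ne_zero ENNReal.ofNat_ne_top]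
  haveI : IsProbabilityMeasure M := ⟨hMuniv⟩
  have hPM : P ≪ M := by
    refine Measure.AbsolutelyContinuous.mk fun s hs h0 => ?_
    rw [hM] at h0
    simp only [Measure.smul_apply, Measure.coe_add, Pi.add_apply, smul_eq_mul] at h0
    rcases mul_eq_zero.mp h0 with h | h
    · exact absurd h (ENNReal.inv_ne_zero.mpr ENNReal.ofNat_ne_top)
    · exact (add_eq_zero.mp h).1
  have hQM : Q ≪ M := by
    refine Measure.AbsolutelyContinuous.mk fun s hs h0 => ?_
    rw [hM] at h0
    simp only [Measure.smul_apply, Measure.coe_add, Pi.add_apply, smul_eq_mul] at h0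
    rcases mul_eq_zero.mp h0 with h | h
    · exact absurd h (ENNReal.inv_ne_zero.mpr ENNReal.ofNat_ne_top)
    · exact (add_eq_zero.mp h).2
  have hPQ2M : P + Q = (2:ℝ≥0∞) • M := by
    rw [hM, smul_smul, ENNReal.mul_inv_cancel two_ne_zero ENNReal.ofNat_ne_top, one_smul]
  have h2M : (P + Q).rnDeriv M =ᵐ[M] fun _ => (2:ℝ≥0∞) := by
    rw [hPQ2M]
    filter_upwards [Measure.rnDeriv_smul_left_of_ne_top' M M (r := 2) ENNReal.ofNat_ne_top,
      Measure.rnDeriv_self M] with x h1 h2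
    rw [h1]
    simp [Pi.smul_apply, h2]
  have hgh : ∀ᵐ x ∂M, P.rnDeriv M x + Q.rnDeriv M x = 2 := by
    filter_upwards [Measure.rnDeriv_add P Q M, h2M] with x h1 h2
    simp only [Pi.add_apply] at h1
    rw [← h1, h2]
  have hkey : ∀ᵐ x ∂M, (P.rnDeriv M x).toReal + (Q.rnDeriv M x).toReal = 2 ∧
      (P.rnDeriv M x).toReal ≤ 2 ∧ (Q.rnDeriv M x).toReal ≤ 2 := by
    filter_upwards [hgh] with x hx
    have hgne : P.rnDeriv M x ≠ ⊤ := by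
      refine ne_top_of_le_ne_top (ENNReal.ofNat_ne_top (n := 2)) ?_
      calc P.rnDeriv M x ≤ P.rnDeriv M x + Q.rnDeriv M x := le_self_add
      _ = 2 := hx
    have hhne : Q.rnDeriv M x ≠ ⊤ := by
      refine ne_top_of_le_ne_top (ENNReal.ofNat_ne_top (n := 2)) ?_
      calc Q.rnDeriv M x ≤ P.rnDeriv M x + Q.rnDeriv M x := le_add_self
      _ = 2 := hx
    have hsum : (P.rnDeriv M x).toReal + (Q.rnDeriv M x).toReal = 2 := by
      rw [← ENNReal.toReal_add hgne hhne, hx]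
      simp
    refine ⟨hsum, ?_, ?_⟩
    · linarith [ENNReal.toReal_nonneg (a := Q.rnDeriv M x)]
    · linarith [ENNReal.toReal_nonneg (a := P.rnDeriv M x)]
  have hgmeas : Measurable (fun x => (P.rnDeriv M x).toReal) :=
    (Measure.measurable_rnDeriv P M).ennreal_toReal
  have hhmeas : Measurable (fun x => (Q.rnDeriv M x).toReal) :=
    (Measure.measurable_rnDeriv Q M).ennreal_toReal
  have hφg : Integrable (fun x => (P.rnDeriv M x).toReal * Real.log (P.rnDeriv M x).toReal) M := by
    refine Integrable.mono' (integrable_const 2)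
      (hgmeas.mul (Real.measurable_log.comp hgmeas)).aestronglyMeasurable ?_
    filter_upwards [hkey] with x hx
    rw [Real.norm_eq_abs]
    exact abs_mul_log_le ENNReal.toReal_nonneg hx.2.1
  have hφh : Integrable (fun x => (Q.rnDeriv M x).toReal * Real.log (Q.rnDeriv M x).toReal) M := by
    refine Integrable.mono' (integrable_const 2)
      (hhmeas.mul (Real.measurable_log.comp hhmeas)).aestronglyMeasurable ?_
    filter_upwards [hkey] with x hx
    rw [Real.norm_eq_abs]
    exact abs_mul_log_le ENNReal.toReal_nonneg hx.2.2
  have hllrP : Integrable (llr P M) P := by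
    refine (integrable_rnDeriv_smul_iff hPM).mp ?_
    simpa only [llr_def, smul_eq_mul] using hφg
  have hllrQ : Integrable (llr Q M) Q := by
    refine (integrable_rnDeriv_smul_iff hQM).mp ?_
    simpa only [llr_def, smul_eq_mul] using hφh
  have hklP : klDivM P M =
      ENNReal.ofReal (∫ x, (P.rnDeriv M x).toReal * Real.log (P.rnDeriv M x).toReal ∂M) := by
    rw [klDivM, if_pos ⟨hPM, hllrP⟩]
    congr 1
    rw [← integral_rnDeriv_smul hPM (f := llr P M)]
    simp only [llr_def, smul_eq_mul]
  have hklQ : klDivM Q M =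
      ENNReal.ofReal (∫ x, (Q.rnDeriv M x).toReal * Real.log (Q.rnDeriv M x).toReal ∂M) := by
    rw [klDivM, if_pos ⟨hQM, hllrQ⟩]
    congr 1
    rw [← integral_rnDeriv_smul hQM (f := llr Q M)]
    simp only [llr_def, smul_eq_mul]
  set a : ℝ := ∫ x, (P.rnDeriv M x).toReal * Real.log (P.rnDeriv M x).toReal ∂M with ha
  set b : ℝ := ∫ x, (Q.rnDeriv M x).toReal * Real.log (Q.rnDeriv M x).toReal ∂M with hb
  have hjs : a + b ≤ 2 * (jsDiv P Q).toReal := by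
    have hjseq : jsDiv P Q = 2⁻¹ * ENNReal.ofReal a + 2⁻¹ * ENNReal.ofReal b := by
      rw [jsDiv, ← hM, hklP, hklQ]
    rw [hjseq, ENNReal.toReal_add, ENNReal.toReal_mul, ENNReal.toReal_mul]
    · have h2 : ((2:ℝ≥0∞)⁻¹).toReal = (2:ℝ)⁻¹ := by simp
      rw [h2]
      have := le_toReal_ofReal a
      have := le_toReal_ofReal b
      linarith
    · exact ENNReal.mul_ne_top (by simp) ENNReal.ofReal_ne_top
    · exact ENNReal.mul_ne_top (by simp) ENNReal.ofReal_ne_top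
  have hIP : ∫ ω, -softplus (-T ω) ∂P =
      ∫ x, (P.rnDeriv M x).toReal * (-softplus (-T x)) ∂M := by
    rw [← integral_rnDeriv_smul hPM (f := fun ω => -softplus (-T ω))]
    simp only [smul_eq_mul]
  have hIQ : ∫ ω, softplus (T ω) ∂Q =
      ∫ x, (Q.rnDeriv M x).toReal * softplus (T x) ∂M := by
    rw [← integral_rnDeriv_smul hQM (f := fun ω => softplus (T ω))]
    simp only [smul_eq_mul]
  have hiP : Integrable (fun x => (P.rnDeriv M x).toReal * (-softplus (-T x))) M := by
    have := (integrable_rnDeriv_smul_iff hPM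
      (f := fun ω => -softplus (-T ω))).mpr hPint.neg
    simpa only [smul_eq_mul] using this
  have hiQ : Integrable (fun x => (Q.rnDeriv M x).toReal * softplus (T x)) M := by
    have := (integrable_rnDeriv_smul_iff hQM
      (f := fun ω => softplus (T ω))).mpr hQint
    simpa only [smul_eq_mul] using this
  have hmain : (∫ ω, -softplus (-T ω) ∂P) - (∫ ω, softplus (T ω) ∂Q) ≤ a + b - Real.log 4 := by
    rw [hIP, hIQ, ← integral_sub hiP hiQ]
    have hφgh : Integrable (fun x => (P.rnDeriv M x).toReal * Real.log (P.rnDeriv M x).toReal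
        + (Q.rnDeriv M x).toReal * Real.log (Q.rnDeriv M x).toReal) M := by
      exact hφg.add hφh
    have hrhs : a + b - Real.log 4 = ∫ x, ((P.rnDeriv M x).toReal * Real.log (P.rnDeriv M x).toReal
        + (Q.rnDeriv M x).toReal * Real.log (Q.rnDeriv M x).toReal - Real.log 4) ∂M := by
      rw [integral_sub hφgh (integrable_const _), integral_add hφg hφh, integral_const]
      simp [ha, hb]
    rw [hrhs]
    refine integral_mono_ae (hiP.sub hiQ) (hφgh.sub (integrable_const _)) ?_
    filter_upwards [hkey] with x hx
    exact softplus_pointwise (T x) ENNReal.toReal_nonneg ENNReal.toReal_nonneg hx.1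
  linarith
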